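/- For functors L: A → B and R: B → A, the pair (L, R) admits a regular pairing (L, R, α, β) whose idempotents ℓ and r split if and only if there exist retractions underline{L} →i L →p underline{L} and underline{R} →i' R →p' underline{R} (p·i = id, p'·i' = id) such that (underline{L}, underline{R}) is an adjoint pair. -/

import Mathlib

open CategoryTheory

universe v₁ u₁ v₂ u₂

section

variable {A : Type u₁} [Category.{v₁} A] {B : Type u₂} [Category.{v₂} B]
variable (L : A ⥤ B) (R : B ⥤ A)

def pairingAlpha (η : 𝟭 A ⟶ L ⋙ R) {X : A} {Y : B} (f : L.obj X ⟶ Y) : X ⟶ R.obj Y :=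
  η.app X ≫ R.map f

def pairingBeta (ε : R ⋙ L ⟶ 𝟭 B) {X : A} {Y : B} (g : X ⟶ R.obj Y) : L.obj X ⟶ Y :=
  L.map g ≫ ε.app Y

/-- `ℓ := εL·Lη : L ⟶ L` (componentwise). -/
def pairingEll (η : 𝟭 A ⟶ L ⋙ R) (ε : R ⋙ L ⟶ 𝟭 B) (X : A) : L.obj X ⟶ L.obj X :=
  L.map (η.app X) ≫ ε.app (L.obj X)

/-- `r := Rε·ηR : R ⟶ R` (componentwise). -/
def pairingR (η : 𝟭 A ⟶ L ⋙ R) (ε : R ⋙ L ⟶ 𝟭 B) (Y : B) : R.obj Y ⟶ R.obj Y :=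
  η.app (R.obj Y) ≫ R.map (ε.app Y)

lemma eps_nat (ε : R ⋙ L ⟶ 𝟭 B) {Y₁ Y₂ : B} (f : Y₁ ⟶ Y₂) :
    L.map (R.map f) ≫ ε.app Y₂ = ε.app Y₁ ≫ f := by
  simpa using ε.naturality f

lemma eta_nat (η : 𝟭 A ⟶ L ⋙ R) {X₁ X₂ : A} (g : X₁ ⟶ X₂) :
    η.app X₁ ≫ R.map (L.map g) = g ≫ η.app X₂ := by
  simpa using (η.naturality g).symm

lemma eps_nat_assoc (ε : R ⋙ L ⟶ 𝟭 B) {Y₁ Y₂ : B} (f : Y₁ ⟶ Y₂) {Z : B} (h : Y₂ ⟶ Z) :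
    L.map (R.map f) ≫ ε.app Y₂ ≫ h = ε.app Y₁ ≫ f ≫ h := by
  rw [← Category.assoc, eps_nat, Category.assoc]

lemma eta_nat_assoc (η : 𝟭 A ⟶ L ⋙ R) {X₁ X₂ : A} (g : X₁ ⟶ X₂) {Z : A}
    (h : R.obj (L.obj X₂) ⟶ Z) :
    η.app X₁ ≫ R.map (L.map g) ≫ h = g ≫ η.app X₂ ≫ h := by
  rw [← Category.assoc, eta_nat, Category.assoc]

lemma betaAlpha_eq (η : 𝟭 A ⟶ L ⋙ R) (ε : R ⋙ L ⟶ 𝟭 B) {X : A} {Y : B}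
    (f : L.obj X ⟶ Y) :
    pairingBeta L R ε (pairingAlpha L R η f) = pairingEll L R η ε X ≫ f := by
  simp only [pairingBeta, pairingAlpha, pairingEll, Functor.map_comp, Category.assoc]
  rw [eps_nat]

lemma alphaBeta_eq (η : 𝟭 A ⟶ L ⋙ R) (ε : R ⋙ L ⟶ 𝟭 B) {X : A} {Y : B}
    (g : X ⟶ R.obj Y) :
    pairingAlpha L R η (pairingBeta L R ε g) = g ≫ pairingR L R η ε Y := by
  simp only [pairingBeta, pairingAlpha, pairingR, Functor.map_comp]
  rw [← Category.assoc, eta_nat, Category.assoc]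

/-- `(L, R)` admits a regular pairing with splitting idempotents
`ℓ`, `r` iff there are retractions `L' → L → L'` and `R' → R → R'` such that
`(L', R')` is an adjoint pair. -/
theorem regular_pairing_split_iff_adjoint_retract :
    (∃ (η : 𝟭 A ⟶ L ⋙ R) (ε : R ⋙ L ⟶ 𝟭 B),
      (∀ (X : A) (Y : B) (f : L.obj X ⟶ Y),
        pairingAlpha L R η (pairingBeta L R ε (pairingAlpha L R η f)) = pairingAlpha L R η f) ∧
      (∀ (X : A) (Y : B) (g : X ⟶ R.obj Y),
        pairingBeta L R ε (pairingAlpha L R η (pairingBeta L R ε g)) = pairingBeta L R ε g) ∧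
      (∃ (L' : A ⥤ B) (pL : L ⟶ L') (iL : L' ⟶ L),
        (∀ X : A, pL.app X ≫ iL.app X = pairingEll L R η ε X) ∧
        (∀ X : A, iL.app X ≫ pL.app X = 𝟙 (L'.obj X))) ∧
      (∃ (R' : B ⥤ A) (pR : R ⟶ R') (iR : R' ⟶ R),
        (∀ Y : B, pR.app Y ≫ iR.app Y = pairingR L R η ε Y) ∧
        (∀ Y : B, iR.app Y ≫ pR.app Y = 𝟙 (R'.obj Y))))
    ↔
    (∃ (L' : A ⥤ B) (R' : B ⥤ A) (iL : L' ⟶ L) (pL : L ⟶ L')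
        (iR : R' ⟶ R) (pR : R ⟶ R'),
      (∀ X : A, iL.app X ≫ pL.app X = 𝟙 (L'.obj X)) ∧
      (∀ Y : B, iR.app Y ≫ pR.app Y = 𝟙 (R'.obj Y)) ∧
      Nonempty (L' ⊣ R')) := by
  constructor
  · rintro ⟨η, ε, hα, hβ, ⟨L', pL, iL, hL1, hL2⟩, ⟨R', pR, iR, hR1, hR2⟩⟩
    -- key identities derived from regularity
    have K1 : ∀ X : A, η.app X ≫ R.map (pairingEll L R η ε X) = η.app X := by
      intro X
      have h := hα X (L.obj X) (𝟙 (L.obj X))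
      rw [betaAlpha_eq] at h
      simpa [pairingAlpha] using h
    have K2 : ∀ Y : B, L.map (pairingR L R η ε Y) ≫ ε.app Y = ε.app Y := by
      intro Y
      have h := hβ (R.obj Y) Y (𝟙 (R.obj Y))
      rw [alphaBeta_eq] at h
      simpa [pairingBeta] using h
    refine ⟨L', R', iL, pL, iR, pR, hL2, hR2, ⟨Adjunction.mkOfHomEquiv
      { homEquiv := fun X Y =>
          { toFun := fun f => η.app X ≫ R.map (pL.app X ≫ f) ≫ pR.app Y
            invFun := fun g => iL.app X ≫ L.map (g ≫ iR.app Y) ≫ ε.app Y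
            left_inv := ?_
            right_inv := ?_ }
        homEquiv_naturality_left_symm := ?_
        homEquiv_naturality_right := ?_ }⟩⟩
    · intro f
      have hK2 : L.map (pR.app Y) ≫ L.map (iR.app Y) ≫ ε.app Y = ε.app Y := by
        rw [← Category.assoc, ← L.map_comp, hR1]; exact K2 Y
      have hEll : L.map (η.app X) ≫ ε.app (L.obj X) = pL.app X ≫ iL.app X :=
        (hL1 X).symm
      simp only [Functor.map_comp, Category.assoc]
      rw [hK2, eps_nat L R ε f, eps_nat_assoc L R ε (pL.app X),
        reassoc_of% hEll, reassoc_of% (hL2 X), reassoc_of% (hL2 X)]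
    · intro g
      have hK1 : η.app X ≫ R.map (pL.app X) ≫ R.map (iL.app X) = η.app X := by
        rw [← R.map_comp, hL1]; exact K1 X
      have hr : η.app (R.obj Y) ≫ R.map (ε.app Y) = pR.app Y ≫ iR.app Y :=
        (hR1 Y).symm
      simp only [Functor.map_comp, Category.assoc]
      rw [reassoc_of% hK1, eta_nat_assoc L R η g, eta_nat_assoc L R η (iR.app Y),
        reassoc_of% hr, reassoc_of% (hR2 Y)]
      slice_lhs 2 3 => rw [hR2 Y]
      simp
    · intro X' X Y f g
      simp only [Equiv.coe_fn_symm_mk]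
      rw [NatTrans.naturality_assoc iL f]
      simp only [Functor.map_comp, Category.assoc]
    · intro X Y Y' f g
      simp only [Equiv.coe_fn_mk]
      rw [Category.assoc, Category.assoc, ← pR.naturality g]
      simp only [Functor.map_comp, Category.assoc, Functor.comp_map]
  · rintro ⟨L', R', iL, pL, iR, pR, h1, h2, ⟨adj⟩⟩
    refine ⟨adj.unit ≫ Functor.whiskerLeft L' iR ≫ Functor.whiskerRight iL R,
      Functor.whiskerRight pR L ≫ Functor.whiskerLeft R' pL ≫ adj.counit, ?_⟩
    set η : 𝟭 A ⟶ L ⋙ R :=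
      adj.unit ≫ Functor.whiskerLeft L' iR ≫ Functor.whiskerRight iL R with hη
    set ε : R ⋙ L ⟶ 𝟭 B :=
      Functor.whiskerRight pR L ≫ Functor.whiskerLeft R' pL ≫ adj.counit with hε
    have ηapp : ∀ X : A, η.app X = adj.unit.app X ≫ iR.app (L'.obj X) ≫
        R.map (iL.app X) := fun X => rfl
    have εapp : ∀ Y : B, ε.app Y = L.map (pR.app Y) ≫ pL.app (R'.obj Y) ≫
        adj.counit.app Y := fun Y => rfl
    have c1 : ∀ X : A, L'.map (R'.map (iL.app X)) ≫ adj.counit.app (L.obj X) =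
        adj.counit.app (L'.obj X) ≫ iL.app X := fun X => by
      simpa using adj.counit.naturality (iL.app X)
    have u2 : ∀ X : A, L.map (adj.unit.app X) ≫ pL.app (R'.obj (L'.obj X)) =
        pL.app X ≫ L'.map (adj.unit.app X) := fun X => by
      simpa using pL.naturality (adj.unit.app X)
    have u3 : ∀ {X₁ X₂ : A} (g : X₁ ⟶ X₂),
        g ≫ adj.unit.app X₂ = adj.unit.app X₁ ≫ R'.map (L'.map g) := fun g => by
      simpa using adj.unit.naturality g
    have hEll : ∀ X : A, pairingEll L R η ε X = pL.app X ≫ iL.app X := by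
      intro X
      rw [pairingEll, ηapp, εapp]
      simp only [Functor.map_comp, Category.assoc]
      slice_lhs 3 4 => rw [← L.map_comp, pR.naturality (iL.app X), L.map_comp]
      try dsimp only [Functor.comp_obj, Functor.id_obj]
      slice_lhs 2 3 => rw [← L.map_comp, h2]
      try dsimp only [Functor.comp_obj, Functor.id_obj]
      simp only [CategoryTheory.Functor.map_id, Category.id_comp, Category.assoc]
      slice_lhs 2 3 => rw [pL.naturality (R'.map (iL.app X))]
      slice_lhs 3 4 => rw [c1 X]
      slice_lhs 1 2 => rw [u2 X]
      slice_lhs 2 3 => rw [adj.left_triangle_components X]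
      simp
    have hr : ∀ Y : B, pairingR L R η ε Y = pR.app Y ≫ iR.app Y := by
      intro Y
      rw [pairingR, ηapp, εapp]
      simp only [Functor.map_comp, Category.assoc]
      slice_lhs 3 4 => rw [← R.map_comp, ← iL.naturality (pR.app Y), R.map_comp]
      try dsimp only [Functor.comp_obj, Functor.id_obj]
      slice_lhs 4 5 => rw [← R.map_comp, h1]
      try dsimp only [Functor.comp_obj, Functor.id_obj]
      simp only [CategoryTheory.Functor.map_id, Category.id_comp, Category.assoc]
      slice_lhs 2 3 => rw [show iR.app (L'.obj (R.obj Y)) ≫ R.map (L'.map (pR.app Y)) =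
          R'.map (L'.map (pR.app Y)) ≫ iR.app (L'.obj (R'.obj Y)) from
            (iR.naturality (L'.map (pR.app Y))).symm]
      slice_lhs 1 2 => rw [show adj.unit.app (R.obj Y) ≫ R'.map (L'.map (pR.app Y)) =
          pR.app Y ≫ adj.unit.app (R'.obj Y) from by
            simpa using (adj.unit.naturality (pR.app Y)).symm]
      slice_lhs 3 4 => rw [show iR.app (L'.obj (R'.obj Y)) ≫ R.map (adj.counit.app Y) =
          R'.map (adj.counit.app Y) ≫ iR.app Y from by
            simpa using iR.naturality (adj.counit.app Y)]
      slice_lhs 2 3 => rw [adj.right_triangle_components Y]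
      simp
    have K1 : ∀ X : A, η.app X ≫ R.map (pairingEll L R η ε X) = η.app X := by
      intro X
      rw [hEll X]
      conv_lhs => rw [ηapp]
      simp only [Functor.map_comp, Category.assoc]
      slice_lhs 3 4 => rw [← R.map_comp, h1]
      try dsimp only [Functor.comp_obj, Functor.id_obj]
      simp only [CategoryTheory.Functor.map_id, Category.id_comp, Category.comp_id]
      rw [ηapp]
    have K2 : ∀ Y : B, L.map (pairingR L R η ε Y) ≫ ε.app Y = ε.app Y := by
      intro Y
      rw [hr Y]
      conv_lhs => rw [εapp]
      simp only [Functor.map_comp, Category.assoc]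
      slice_lhs 2 3 => rw [← L.map_comp, h2]
      try dsimp only [Functor.comp_obj, Functor.id_obj]
      simp only [CategoryTheory.Functor.map_id, Category.id_comp, Category.comp_id]
      rw [εapp]
    refine ⟨?_, ?_, ⟨L', pL, iL, fun X => (hEll X).symm, h1⟩,
      ⟨R', pR, iR, fun Y => (hr Y).symm, h2⟩⟩
    · intro X Y f
      rw [betaAlpha_eq]
      simp only [pairingAlpha, Functor.map_comp]
      rw [← Category.assoc, K1]
    · intro X Y g
      rw [alphaBeta_eq]
      simp only [pairingBeta, Functor.map_comp, Category.assoc]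
      rw [K2]
end
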